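/- arXiv:1906.01065 — 4 statements merged into one kernel-verified Lean document; each statement's English description precedes it below -/
import Mathlib

section
/- Let λ > 0 and b ≥ 0 satisfy λ > b. Then the equation λ·sin(γ) = b has a unique solution γ_s in [0, π/2), and the equation (π/2)·λ·sinc(γ) = b, where sinc(γ) = sin(γ)/γ, has a unique solution γ_m in (π/2, π]; moreover γ_s ≤ γ_m. -/
open Real

/-- The cardinal sine function `sinc x = sin x / x`, with `sinc 0 = 1`. -/
noncomputable def sinc (x : ℝ) : ℝ := if x = 0 then 1 else Real.sin x / x

lemma sinc_strict : ∀ x ∈ Set.Icc (π/2) π, ∀ y ∈ Set.Icc (π/2) π, x < y →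
    Real.sin y / y < Real.sin x / x := by
  intro x hx y hy hxy
  have hx0 : 0 < x := lt_of_lt_of_le (by positivity) hx.1
  have hy0 : 0 < y := lt_trans hx0 hxy
  have hsy : Real.sin y < Real.sin x := by
    rw [← Real.sin_pi_sub y, ← Real.sin_pi_sub x]
    exact Real.sin_lt_sin_of_lt_of_le_pi_div_two (by linarith [hy.2]) (by linarith [hx.1])
      (by linarith)
  have hsx : 0 < Real.sin x := by
    rcases lt_or_eq_of_le hy.2 with h | h
    · calc (0:ℝ) ≤ Real.sin y := Real.sin_nonneg_of_nonneg_of_le_pi (by linarith [hy.1, Real.pi_pos]) hy.2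
        _ < Real.sin x := hsy
    · have : Real.sin y = 0 := by rw [h]; exact Real.sin_pi
      linarith
  have hsyn : 0 ≤ Real.sin y := Real.sin_nonneg_of_nonneg_of_le_pi (by linarith [hy.1, Real.pi_pos]) hy.2
  calc Real.sin y / y ≤ Real.sin x / y := by
        gcongr
    _ < Real.sin x / x := by
        apply div_lt_div_of_pos_left hsx hx0 hxy

/-- for `λ > b ≥ 0`, `λ > 0`, the equation `λ·sin γ = b` has a unique
solution `γ_s ∈ [0, π/2)`, the equation `(π/2)·λ·sinc γ = b` has a unique solution
`γ_m ∈ (π/2, π]`, and `γ_s ≤ γ_m`. -/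
theorem stmt_6 (l b : ℝ) (hl : 0 < l) (hb : 0 ≤ b) (hlb : b < l) :
    (∃! γs : ℝ, γs ∈ Set.Ico 0 (π / 2) ∧ l * Real.sin γs = b) ∧
    (∃! γm : ℝ, γm ∈ Set.Ioc (π / 2) π ∧ (π / 2) * l * _root_.sinc γm = b) ∧
    (∀ γs γm : ℝ, γs ∈ Set.Ico 0 (π / 2) → l * Real.sin γs = b →
      γm ∈ Set.Ioc (π / 2) π → (π / 2) * l * _root_.sinc γm = b → γs ≤ γm) := by
  have hpi := Real.pi_pos
  have hbl1 : b / l < 1 := (div_lt_one hl).mpr hlb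
  have hbl0 : 0 ≤ b / l := div_nonneg hb hl.le
  refine ⟨?_, ?_, ?_⟩
  · -- γs part
    refine ⟨Real.arcsin (b / l), ⟨⟨Real.arcsin_nonneg.mpr hbl0, ?_⟩, ?_⟩, ?_⟩
    · exact (Real.arcsin_lt_pi_div_two).mpr hbl1
    · rw [Real.sin_arcsin (by linarith) (by linarith)]
      field_simp
    · rintro y ⟨⟨hy0, hy2⟩, hye⟩
      have : Real.sin y = b / l := by field_simp at hye ⊢; linarith
      rw [← this, Real.arcsin_sin (by linarith) (by linarith)]
  · -- γm part: g γ = (π/2) l sinc γ, use IVT on [π/2, π]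
    have hcont : ContinuousOn (fun γ : ℝ => (π / 2) * l * _root_.sinc γ) (Set.Icc (π/2) π) := by
      apply ContinuousOn.congr (f := fun γ : ℝ => (π / 2) * l * (Real.sin γ / γ))
      · exact (continuousOn_const.mul ((Real.continuous_sin.continuousOn).div
          continuousOn_id (fun x hx => by
            have : (0:ℝ) < x := lt_of_lt_of_le (by positivity) hx.1
            exact ne_of_gt this)))
      · intro x hx
        have hx0 : x ≠ 0 := ne_of_gt (lt_of_lt_of_le (by positivity) hx.1)
        simp [_root_.sinc, hx0]
    have hval2 : (π / 2) * l * _root_.sinc (π/2) = l := by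
      have h2 : (π/2 : ℝ) ≠ 0 := by positivity
      simp [_root_.sinc, h2, Real.sin_pi_div_two]
      field_simp
    have hvalpi : (π / 2) * l * _root_.sinc π = 0 := by
      simp [_root_.sinc, Real.pi_ne_zero, Real.sin_pi]
    have hmem : b ∈ Set.Icc ((π / 2) * l * _root_.sinc π) ((π / 2) * l * _root_.sinc (π/2)) := by
      rw [hval2, hvalpi]; exact ⟨hb, hlb.le⟩
    obtain ⟨c, hc, hcb'⟩ := intermediate_value_Icc' (by linarith) hcont hmem
    have hcb : (π / 2) * l * _root_.sinc c = b := hcb'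
    have hc2 : π/2 < c := by
      rcases lt_or_eq_of_le hc.1 with h | h
      · exact h
      · exfalso; rw [← h, hval2] at hcb; linarith
    have key : ∀ x ∈ Set.Ioc (π/2) π, ∀ y ∈ Set.Ioc (π/2) π,
        (π / 2) * l * _root_.sinc x = b → (π / 2) * l * _root_.sinc y = b → x = y := by
      intro x hx y hy hxe hye
      by_contra hne
      have hsinc : ∀ z, π/2 < z → z ≤ π → _root_.sinc z = Real.sin z / z := by
        intro z h1 h2
        have : z ≠ 0 := ne_of_gt (lt_trans (by positivity) h1)
        simp [_root_.sinc, this]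
      rcases lt_or_gt_of_ne hne with h | h
      · have := sinc_strict x ⟨hx.1.le, hx.2⟩ y ⟨hy.1.le, hy.2⟩ h
        rw [hsinc x hx.1 hx.2] at hxe
        rw [hsinc y hy.1 hy.2] at hye
        have hpl : 0 < (π/2) * l := by positivity
        nlinarith
      · have := sinc_strict y ⟨hy.1.le, hy.2⟩ x ⟨hx.1.le, hx.2⟩ h
        rw [hsinc x hx.1 hx.2] at hxe
        rw [hsinc y hy.1 hy.2] at hye
        have hpl : 0 < (π/2) * l := by positivity
        nlinarith
    exact ⟨c, ⟨⟨hc2, hc.2⟩, hcb⟩, fun y hy => key y hy.1 c ⟨hc2, hc.2⟩ hy.2 hcb⟩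
  · intro γs γm hs _ hm _
    linarith [hs.2, hm.1]
end

section
/- Let x_1, …, x_n ∈ ℝ with max_i x_i − min_i x_i = φ ∈ [0, π], and let m, s be indices achieving the maximum and minimum. Then ∑_{j=1}^{n} (sin(x_m − x_j) − sin(x_s − x_j)) ≥ n·sin(φ). -/
open Real

/-- with `x_m` the max, `x_s` the min and `x_m − x_s = φ ∈ [0, π]`,
`∑_j (sin(x_m − x_j) − sin(x_s − x_j)) ≥ n·sin φ`. -/
theorem stmt_10 (n : ℕ) (x : Fin n → ℝ) (m s : Fin n)
    (hm : ∀ j, x j ≤ x m) (hs : ∀ j, x s ≤ x j)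
    (φ : ℝ) (hφ : φ ∈ Set.Icc 0 π) (hms : x m - x s = φ) :
    (n : ℝ) * Real.sin φ ≤ ∑ j, (Real.sin (x m - x j) - Real.sin (x s - x j)) := by
  obtain ⟨hφ0, hφπ⟩ := hφ
  have key : ∀ j, Real.sin φ ≤ Real.sin (x m - x j) - Real.sin (x s - x j) := by
    intro j
    have h1 := hm j
    have h2 := hs j
    rw [Real.sin_sub_sin]
    have hab : (x m - x j - (x s - x j)) / 2 = φ / 2 := by rw [← hms]; ring
    have hφeq : Real.sin φ = 2 * Real.sin (φ / 2) * Real.cos (φ / 2) := by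
      rw [show φ = 2 * (φ / 2) by ring, Real.sin_two_mul]; ring_nf
    rw [hφeq, hab]
    have hsin : 0 ≤ Real.sin (φ / 2) :=
      Real.sin_nonneg_of_nonneg_of_le_pi (by linarith) (by linarith [Real.pi_pos])
    have habs : |(x m - x j + (x s - x j)) / 2| ≤ φ / 2 := by
      rw [abs_le]; constructor <;> [linarith; linarith]
    have hcos : Real.cos (φ / 2) ≤ Real.cos ((x m - x j + (x s - x j)) / 2) := by
      rw [← Real.cos_abs ((x m - x j + (x s - x j)) / 2)]
      exact Real.cos_le_cos_of_nonneg_of_le_pi (abs_nonneg _) (by linarith [Real.pi_pos]) habs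
    have := mul_le_mul_of_nonneg_left hcos hsin
    nlinarith
  calc (n : ℝ) * Real.sin φ = ∑ _j : Fin n, Real.sin φ := by
        rw [Finset.sum_const, Finset.card_univ, Fintype.card_fin, nsmul_eq_mul]
    _ ≤ _ := Finset.sum_le_sum fun j _ => key j
end

section
/- Let φ_s = arcsin(b/c) with 0 ≤ b < c. Then for any continuous function γ: [0,∞) → [0, π] with φ_s < γ(0) < π − φ_s, if γ satisfies the differential inequality D⁺γ(t) ≤ b − c·sin(γ(t)) for all t (upper Dini derivative), then γ(t) ≤ max(γ(0), φ_s) for all t ≥ 0 and lim sup_{t→∞} γ(t) ≤ φ_s. -/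
open Real Filter Set

-- frequently-below from limsup bound, valid for negative thresholds in ℝ
lemma freq_lt_of_limsup_le {u : ℝ → ℝ} {l : Filter ℝ} [hl : l.NeBot] {L r : ℝ}
    (h : Filter.limsup u l ≤ L) (hLr : L < r) (hr : r ≤ 0) : ∃ᶠ x in l, u x < r := by
  by_contra hcon
  rw [Filter.not_frequently] at hcon
  have hev : ∀ᶠ x in l, r ≤ u x := hcon.mono fun x hx => not_lt.1 hx
  have hlim : Filter.limsup u l = sInf {a | ∀ᶠ x in l, u x ≤ a} := Filter.limsup_eq
  rcases Set.eq_empty_or_nonempty {a | ∀ᶠ x in l, u x ≤ a} with hE | hNE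
  · rw [hlim, hE, Real.sInf_empty] at h; linarith
  · have hS : ∀ a ∈ {a | ∀ᶠ x in l, u x ≤ a}, r ≤ a := by
      intro a ha
      obtain ⟨x, h1, h2⟩ := (hev.and ha).exists
      exact h1.trans h2
    have := le_csInf hNE hS
    rw [← hlim] at this
    linarith

lemma map_add_nhdsWithin_Ioi (x : ℝ) :
    Filter.map (fun τ : ℝ => x + τ) (nhdsWithin 0 (Set.Ioi 0)) = nhdsWithin x (Set.Ioi x) := by
  have h := (Homeomorph.addLeft x).isEmbedding.map_nhdsWithin_eq (Set.Ioi (0:ℝ)) 0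
  simpa [Set.image_const_add_Ioi] using h

/-- Fencing lemma with Dini-limsup hypothesis only at contact points, for nonpositive
barrier derivative. Adapted from `image_le_of_liminf_slope_right_lt_deriv_boundary'`. -/
lemma fence {f : ℝ → ℝ} {a b : ℝ} {f' B B' : ℝ → ℝ}
    (hf : ContinuousOn f (Set.Icc a b))
    (hf' : ∀ x ∈ Set.Ico a b, f x = B x →
      Filter.limsup (fun τ : ℝ => (f (x + τ) - f x) / τ) (nhdsWithin 0 (Set.Ioi 0)) ≤ f' x)
    (ha : f a ≤ B a) (hB : ContinuousOn B (Set.Icc a b))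
    (hB' : ∀ x ∈ Set.Ico a b, HasDerivWithinAt B (B' x) (Set.Ici x) x)
    (hB0 : ∀ x ∈ Set.Ico a b, f x = B x → B' x ≤ 0)
    (bound : ∀ x ∈ Set.Ico a b, f x = B x → f' x < B' x) :
    ∀ ⦃x⦄, x ∈ Set.Icc a b → f x ≤ B x := by
  change Icc a b ⊆ { x | f x ≤ B x }
  set s := { x | f x ≤ B x } ∩ Icc a b
  have A : ContinuousOn (fun x => (f x, B x)) (Icc a b) := hf.prodMk hB
  have hcl : IsClosed s := by
    simp only [s, inter_comm]
    exact A.preimage_isClosed_of_isClosed isClosed_Icc OrderClosedTopology.isClosed_le'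
  apply hcl.Icc_subset_of_forall_exists_gt ha
  rintro x ⟨hxB : f x ≤ B x, xab⟩ y hy
  cases' hxB.lt_or_eq with hxB hxB
  · refine nonempty_of_mem (inter_mem ?_ (Ioc_mem_nhdsGT_of_mem ⟨le_rfl, hy⟩))
    have h1 : ∀ᶠ z in nhdsWithin x (Icc a b), f z < B z :=
      A x (Ico_subset_Icc_self xab) (IsOpen.mem_nhds (isOpen_lt continuous_fst continuous_snd) hxB)
    have h2 : ∀ᶠ z in nhdsWithin x (Ioi x), f z < B z :=
      nhdsWithin_le_of_mem (Icc_mem_nhdsGT_of_mem xab) h1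
    exact h2.mono fun y => le_of_lt
  · rcases exists_between (bound x xab hxB) with ⟨r, hfr, hrB⟩
    have hr0 : r ≤ 0 := (hrB.trans_le (hB0 x xab hxB)).le
    have hfreq0 : ∃ᶠ τ in nhdsWithin (0:ℝ) (Set.Ioi 0), (f (x + τ) - f x) / τ < r :=
      freq_lt_of_limsup_le (hf' x xab hxB) hfr hr0
    have hf'' : ∃ᶠ z in nhdsWithin x (Set.Ioi x), slope f x z < r := by
      rw [← map_add_nhdsWithin_Ioi x, Filter.frequently_map]
      refine hfreq0.mono fun τ hτ => ?_
      rwa [slope_def_field, add_sub_cancel_left]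
    have HB : ∀ᶠ z in nhdsWithin x (Set.Ioi x), r < slope B x z :=
      (hasDerivWithinAt_iff_tendsto_slope' <| lt_irrefl x).1 (hB' x xab).Ioi_of_Ici
        (Ioi_mem_nhds hrB)
    obtain ⟨z, hfz, hzB, hz⟩ : ∃ z, slope f x z < r ∧ r < slope B x z ∧ z ∈ Ioc x y :=
      (hf''.and_eventually (HB.and (Ioc_mem_nhdsGT_of_mem ⟨le_rfl, hy⟩))).exists
    refine ⟨z, ?_, hz⟩
    have := (hfz.trans hzB).le
    rwa [slope_def_field, slope_def_field, div_le_div_iff_of_pos_right (sub_pos.2 hz.1), hxB,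
      sub_le_sub_iff_right] at this

lemma sin_strict_aux {φ y : ℝ} (h0 : 0 ≤ φ) (_hφ : φ ≤ π / 2) (h1 : φ < y) (h2 : y < π - φ) :
    Real.sin φ < Real.sin y := by
  rcases le_total y (π / 2) with hy | hy
  · exact Real.strictMonoOn_sin ⟨by linarith, by linarith⟩ ⟨by linarith, hy⟩ h1
  · rw [← Real.sin_pi_sub y]
    exact Real.strictMonoOn_sin ⟨by linarith, by linarith⟩ ⟨by linarith, by linarith⟩ (by linarith)

lemma sin_min_aux {α β y : ℝ} (h0 : 0 ≤ α) (h1 : α ≤ y) (h2 : y ≤ β) (h3 : β ≤ π) :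
    min (Real.sin α) (Real.sin β) ≤ Real.sin y := by
  rcases le_total y (π / 2) with hy | hy
  · exact (min_le_left _ _).trans
      (Real.strictMonoOn_sin.monotoneOn ⟨by linarith, by linarith⟩ ⟨by linarith, hy⟩ h1)
  · refine (min_le_right _ _).trans ?_
    rw [← Real.sin_pi_sub β, ← Real.sin_pi_sub y]
    exact Real.strictMonoOn_sin.monotoneOn ⟨by linarith, by linarith⟩
      ⟨by linarith, by linarith⟩ (by linarith)

/-- ultimate boundedness. If `γ : [0,∞) → [0,π]` is continuous, starts in
`(φ_s, π − φ_s)` with `φ_s = arcsin(b/c)`, and its upper Dini derivative satisfies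
`D⁺γ(t) ≤ b − c·sin(γ(t))`, then `γ(t) ≤ max(γ(0), φ_s)` for all `t ≥ 0` and
`limsup_{t→∞} γ(t) ≤ φ_s`. -/
theorem stmt_17 (b c : ℝ) (hc : 0 < c) (hb : 0 ≤ b) (hbc : b < c)
    (γ : ℝ → ℝ) (hcont : ContinuousOn γ (Set.Ici 0))
    (hrange : ∀ t ≥ (0 : ℝ), γ t ∈ Set.Icc 0 π)
    (h0l : Real.arcsin (b / c) < γ 0) (h0u : γ 0 < π - Real.arcsin (b / c))
    (hDini : ∀ t ≥ (0 : ℝ),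
      Filter.limsup (fun τ : ℝ => (γ (t + τ) - γ t) / τ) (nhdsWithin 0 (Set.Ioi 0))
        ≤ b - c * Real.sin (γ t)) :
    (∀ t ≥ (0 : ℝ), γ t ≤ max (γ 0) (Real.arcsin (b / c))) ∧
    Filter.limsup γ Filter.atTop ≤ Real.arcsin (b / c) := by
  set φ := Real.arcsin (b / c) with hφdef
  have hbc1 : b / c ≤ 1 := le_of_lt ((div_lt_one hc).2 hbc)
  have hbc0 : 0 ≤ b / c := div_nonneg hb hc.le
  have hφ0 : 0 ≤ φ := Real.arcsin_nonneg.2 hbc0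
  have hφ2 : φ ≤ π / 2 := Real.arcsin_le_pi_div_two _
  have hsinφ : Real.sin φ = b / c := Real.sin_arcsin (by linarith) hbc1
  have hcsinφ : c * Real.sin φ = b := by rw [hsinφ]; field_simp
  -- strict negativity of RHS in the open strip
  have hneg : ∀ y : ℝ, φ < y → y < π - φ → b - c * Real.sin y < 0 := by
    intro y hy1 hy2
    have := sin_strict_aux hφ0 hφ2 hy1 hy2
    nlinarith [this]
  -- Part 1: γ t ≤ γ 0 for all t ≥ 0
  have part1 : ∀ t ≥ (0:ℝ), γ t ≤ γ 0 := by
    intro T hT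
    have := fence (f := γ) (a := 0) (b := T) (f' := fun x => b - c * Real.sin (γ x))
      (B := fun _ => γ 0) (B' := fun _ => 0)
      (hcont.mono (Set.Icc_subset_Ici_self))
      (fun x hx _ => hDini x hx.1)
      le_rfl continuousOn_const
      (fun x _ => hasDerivWithinAt_const x _ (γ 0))
      (fun _ _ _ => le_rfl)
      (fun x hx hxB => by
        show b - c * Real.sin (γ x) < 0
        rw [show γ x = γ 0 from hxB]; exact hneg _ h0l h0u)
    exact this ⟨hT, le_rfl⟩
  constructor
  · exact fun t ht => (part1 t ht).trans (le_max_left _ _)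
  -- Part 2: limsup ≤ φ
  have hγ0π : γ 0 < π - φ := h0u
  have key : ∀ ε : ℝ, 0 < ε → ε < γ 0 - φ → ∀ᶠ t in atTop, γ t ≤ φ + ε := by
    intro ε hε hε2
    have hφε : φ + ε < γ 0 := by linarith
    have hφεπ : φ + ε < π - φ := by linarith
    set m := min (Real.sin (φ + ε)) (Real.sin (γ 0)) with hm
    have hm1 : b / c < Real.sin (φ + ε) := by
      rw [← hsinφ]; exact sin_strict_aux hφ0 hφ2 (by linarith) hφεπ
    have hm2 : b / c < Real.sin (γ 0) := by
      rw [← hsinφ]; exact sin_strict_aux hφ0 hφ2 h0l h0u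
    have hmpos : b / c < m := lt_min hm1 hm2
    obtain ⟨δ, hδpos, hdec⟩ : ∃ δ > (0:ℝ), ∀ y : ℝ, φ + ε ≤ y → y ≤ γ 0 → b - c * Real.sin y < -δ := by
      have hγ0π' : γ 0 ≤ π := (hrange 0 le_rfl).2
      have hbm : b < c * m := by
        have := (div_lt_iff₀ hc).1 hmpos
        linarith
      refine ⟨(c * m - b) / 2, by linarith, ?_⟩
      intro y hy1 hy2
      have hsm : m ≤ Real.sin y := sin_min_aux (by linarith) hy1 hy2 hγ0π'
      nlinarith
    obtain ⟨T₀, hT₀pos, hT₀lt⟩ : ∃ T > (0:ℝ), γ 0 - δ * T < φ + ε := by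
      refine ⟨(γ 0 - (φ + ε)) / δ + 1, ?_, ?_⟩
      · have : 0 ≤ (γ 0 - (φ + ε)) / δ := div_nonneg (by linarith) hδpos.le
        linarith
      · have hmul : δ * ((γ 0 - (φ + ε)) / δ + 1) = (γ 0 - (φ + ε)) + δ := by
          field_simp
        rw [hmul]; linarith
    have step2a : ∃ t₁, 0 ≤ t₁ ∧ γ t₁ ≤ φ + ε := by
      by_contra hcon
      push_neg at hcon
      have hall : ∀ t : ℝ, 0 ≤ t → φ + ε < γ t := hcon
      have hfence := fence (f := γ) (a := 0) (b := T₀)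
        (f' := fun x => b - c * Real.sin (γ x))
        (B := fun x => γ 0 - δ * x) (B' := fun _ => -δ)
        (hcont.mono (Set.Icc_subset_Ici_self))
        (fun x hx _ => hDini x hx.1)
        (by simp) (by fun_prop)
        (fun x _ => by
          simpa using ((((hasDerivWithinAt_id x (Set.Ici x))).const_mul δ).const_sub (γ 0)))
        (fun _ _ _ => neg_nonpos.mpr hδpos.le)
        (fun x hx hxB => by
          show b - c * Real.sin (γ x) < -δ
          exact hdec _ (hall x hx.1).le (part1 x hx.1))
      have hend : γ T₀ ≤ γ 0 - δ * T₀ := hfence ⟨hT₀pos.le, le_rfl⟩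
      have := hall T₀ hT₀pos.le
      linarith
    obtain ⟨t₁, ht₁0, ht₁⟩ := step2a
    -- Step 2b: γ stays below φ + ε after t₁
    have step2b : ∀ t ≥ t₁, γ t ≤ φ + ε := by
      intro T hT
      have := fence (f := γ) (a := t₁) (b := T)
        (f' := fun x => b - c * Real.sin (γ x))
        (B := fun _ => φ + ε) (B' := fun _ => 0)
        (hcont.mono (fun x hx => le_trans ht₁0 hx.1))
        (fun x hx _ => hDini x (le_trans ht₁0 hx.1))
        ht₁ continuousOn_const
        (fun x _ => hasDerivWithinAt_const x _ _)
        (fun _ _ _ => le_rfl)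
        (fun x hx hxB => by
          show b - c * Real.sin (γ x) < 0
          rw [show γ x = φ + ε from hxB]; exact hneg _ (by linarith) (by linarith))
      exact this ⟨hT, le_rfl⟩
    exact Filter.eventually_atTop.2 ⟨t₁, step2b⟩
  -- conclude limsup ≤ φ
  have hcobdd : Filter.IsCoboundedUnder (· ≤ ·) Filter.atTop γ :=
    Filter.isCoboundedUnder_le_of_eventually_le Filter.atTop (x := 0) (by
      filter_upwards [Filter.eventually_ge_atTop (0:ℝ)] with t ht
      exact (hrange t ht).1)
  have hls : ∀ ε : ℝ, 0 < ε → ε < γ 0 - φ → Filter.limsup γ Filter.atTop ≤ φ + ε := by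
    intro ε h1 h2
    exact Filter.limsup_le_of_le hcobdd (key ε h1 h2)
  by_contra hcon
  push_neg at hcon
  set L := Filter.limsup γ Filter.atTop
  have hd : 0 < γ 0 - φ := by linarith
  set ε := min ((L - φ) / 2) ((γ 0 - φ) / 2) with hε
  have hε1 : 0 < ε := lt_min (by linarith) (by linarith)
  have hε2 : ε < γ 0 - φ := by
    have : ε ≤ (γ 0 - φ) / 2 := min_le_right _ _
    linarith
  have hεle : ε ≤ (L - φ) / 2 := min_le_left _ _
  have h4 := hls ε hε1 hε2
  linarith
end

section
/- For the Kuramoto system θ̇_i = ω_i + ∑_{j=1}^n K·sin(θ_j − θ_i) on the complete graph with uniform coupling K/1 (i.e., each pairwise coupling strength K), if n·K > max_{i,j}|ω_i − ω_j| =: a, then the set S(φ) = {θ : max_{i,j}|θ_i − θ_j| ≤ φ} is positively invariant for every φ ∈ [arcsin(a/(nK)), π − arcsin(a/(nK))]. -/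
open Real Set Filter

lemma sin_superadd {A B : ℝ} (hA : 0 ≤ A) (hB : 0 ≤ B) (hAB : A + B ≤ 2 * π) :
    Real.sin (A + B) ≤ Real.sin A + Real.sin B := by
  have hπ := Real.pi_pos
  have hadd : Real.sin A + Real.sin B = 2 * Real.sin ((A + B) / 2) * Real.cos ((A - B) / 2) := by
    have h := Real.sin_sub_sin A (-B)
    simp only [Real.sin_neg, sub_neg_eq_add, ← sub_eq_add_neg] at h
    exact h
  rw [hadd]
  have h2 : Real.sin (A + B) = 2 * Real.sin ((A + B) / 2) * Real.cos ((A + B) / 2) := by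
    rw [← Real.sin_two_mul]; ring_nf
  rw [h2]
  have hs : 0 ≤ Real.sin ((A + B) / 2) :=
    Real.sin_nonneg_of_nonneg_of_le_pi (by linarith) (by linarith)
  have hc : Real.cos ((A + B) / 2) ≤ Real.cos ((A - B) / 2) := by
    rw [← Real.cos_abs ((A - B) / 2)]
    apply Real.cos_le_cos_of_nonneg_of_le_pi (abs_nonneg _) (by linarith)
    rw [abs_le]; constructor <;> [linarith; linarith]
  nlinarith

lemma sin_lip (x y : ℝ) : Real.sin x - Real.sin y ≤ |x - y| := by
  have h1 : |Real.sin ((x - y) / 2)| ≤ |x - y| / 2 := by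
    have := Real.abs_sin_le_abs (x := (x - y) / 2)
    rwa [abs_div, abs_two] at this
  have h2 : |Real.cos ((x + y) / 2)| ≤ 1 := Real.abs_cos_le_one _
  calc Real.sin x - Real.sin y
      = 2 * (Real.sin ((x - y) / 2) * Real.cos ((x + y) / 2)) := by
        rw [Real.sin_sub_sin]; ring
    _ ≤ 2 * (|x - y| / 2 * 1) := by
        have := calc Real.sin ((x - y) / 2) * Real.cos ((x + y) / 2)
            ≤ |Real.sin ((x - y) / 2) * Real.cos ((x + y) / 2)| := le_abs_self _
          _ = |Real.sin ((x - y) / 2)| * |Real.cos ((x + y) / 2)| := abs_mul _ _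
          _ ≤ |x - y| / 2 * 1 := mul_le_mul h1 h2 (abs_nonneg _) (by positivity)
        linarith
    _ = |x - y| := by ring

/-- for the Kuramoto system `θ̇_i = ω_i + ∑_j K·sin(θ_j − θ_i)` on the
complete graph with uniform coupling `K`, if `n·K > a := max_{i,j} |ω_i − ω_j|`, then
for every `φ ∈ [arcsin(a/(nK)), π − arcsin(a/(nK))]` the set
`{θ : max_{i,j}|θ_i − θ_j| ≤ φ}` is positively invariant. -/
theorem stmt_18 (n : ℕ) (hn : 0 < n) (K : ℝ) (hK : 0 < K)
    (ω : Fin n → ℝ) (a : ℝ)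
    (ha : IsGreatest {v : ℝ | ∃ i j : Fin n, v = |ω i - ω j|} a)
    (haK : a < (n : ℝ) * K)
    (θ : ℝ → Fin n → ℝ)
    (hODE : ∀ i : Fin n, ∀ t : ℝ,
      HasDerivAt (fun s => θ s i)
        (ω i + ∑ j, K * Real.sin (θ t j - θ t i)) t) :
    ∀ φ : ℝ, φ ∈ Set.Icc (Real.arcsin (a / ((n : ℝ) * K)))
        (π - Real.arcsin (a / ((n : ℝ) * K))) →
      (∀ i j : Fin n, |θ 0 i - θ 0 j| ≤ φ) →
      ∀ t ≥ (0 : ℝ), ∀ i j : Fin n, |θ t i - θ t j| ≤ φ := by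
  intro φ hφ h0 t ht
  haveI : Nonempty (Fin n) := ⟨⟨0, hn⟩⟩
  have hπ := Real.pi_pos
  have hnK : 0 < (n : ℝ) * K := mul_pos (by exact_mod_cast hn) hK
  have ha0 : 0 ≤ a := by
    obtain ⟨i, j, hij⟩ := ha.1
    rw [hij]; exact abs_nonneg _
  set c : ℝ := a / ((n : ℝ) * K) with hc
  have hc0 : 0 ≤ c := div_nonneg ha0 hnK.le
  have hc1 : c < 1 := (div_lt_one hnK).2 haK
  have harc0 : 0 ≤ Real.arcsin c := Real.arcsin_nonneg.2 hc0
  have harc2 : Real.arcsin c ≤ π / 2 := Real.arcsin_le_pi_div_two c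
  have hφ0 : 0 ≤ φ := le_trans harc0 hφ.1
  have hφπ : φ ≤ π := by linarith [hφ.2]
  have hsinφ : a ≤ (n : ℝ) * K * Real.sin φ := by
    have hsc : Real.sin (Real.arcsin c) = c := Real.sin_arcsin (by linarith) hc1.le
    have hcsin : c ≤ Real.sin φ := by
      rcases le_total φ (π / 2) with h | h
      · have := Real.strictMonoOn_sin.monotoneOn
          (Set.mem_Icc.2 ⟨by linarith, harc2⟩)
          (Set.mem_Icc.2 ⟨by linarith, h⟩) hφ.1
        rwa [hsc] at this
      · have h1 : Real.arcsin c ≤ π - φ := by linarith [hφ.2]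
        have := Real.strictMonoOn_sin.monotoneOn
          (Set.mem_Icc.2 ⟨by linarith, harc2⟩)
          (Set.mem_Icc.2 ⟨by linarith, by linarith⟩) h1
        rwa [hsc, Real.sin_pi_sub] at this
    calc a = c * ((n : ℝ) * K) := by rw [hc, div_mul_cancel₀ _ hnK.ne']
      _ ≤ Real.sin φ * ((n : ℝ) * K) := mul_le_mul_of_nonneg_right hcsin hnK.le
      _ = (n : ℝ) * K * Real.sin φ := by ring
  have hω : ∀ i j : Fin n, ω i - ω j ≤ a :=
    fun i j => le_trans (le_abs_self _) (ha.2 ⟨i, j, rfl⟩)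
  have hθc : ∀ i : Fin n, Continuous (fun s => θ s i) := by
    intro i
    rw [continuous_iff_continuousAt]
    exact fun s => (hODE i s).continuousAt
  have hne : (Finset.univ : Finset (Fin n)).Nonempty := Finset.univ_nonempty
  set M : ℝ → ℝ := fun s => Finset.univ.sup' hne (fun i => θ s i) with hMdef
  set m : ℝ → ℝ := fun s => Finset.univ.inf' hne (fun i => θ s i) with hmdef
  have hMc : Continuous M := by
    rw [continuous_iff_continuousAt]
    exact fun x => ContinuousAt.finset_sup'_apply hne (fun i _ => (hθc i).continuousAt)
  have hmc : Continuous m := by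
    rw [continuous_iff_continuousAt]
    exact fun x => ContinuousAt.finset_inf'_apply hne (fun i _ => (hθc i).continuousAt)
  have hθM : ∀ (s : ℝ) (i : Fin n), θ s i ≤ M s :=
    fun s i => Finset.le_sup' (fun i => θ s i) (Finset.mem_univ i)
  have hmθ : ∀ (s : ℝ) (i : Fin n), m s ≤ θ s i :=
    fun s i => Finset.inf'_le (fun i => θ s i) (Finset.mem_univ i)
  set g : ℝ → ℝ := fun s => M s - m s with hgdef
  have hgc : Continuous g := hMc.sub hmc
  have hgab : ∀ s : ℝ, ∃ p q : Fin n, M s = θ s p ∧ m s = θ s q := by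
    intro s
    obtain ⟨p, _, hp⟩ := Finset.exists_mem_eq_sup' hne (fun i => θ s i)
    obtain ⟨q, _, hq⟩ := Finset.exists_mem_eq_inf' hne (fun i => θ s i)
    exact ⟨p, q, hp, hq⟩
  have hg0 : g 0 ≤ φ := by
    obtain ⟨p, q, hp, hq⟩ := hgab 0
    have e : g 0 = θ 0 p - θ 0 q := by
      show M 0 - m 0 = _
      rw [hp, hq]
    rw [e]
    exact le_trans (le_abs_self _) (h0 p q)
  set L : ℝ := 2 * ((n : ℝ) * K) with hLdef
  have hL0 : 0 < L := by positivity
  set F : ℝ → ℝ :=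
    fun x => a + ∑ j, K * (Real.sin (θ x j - M x) - Real.sin (θ x j - m x)) with hFdef
  -- liminf slope bound
  have hslope : ∀ x : ℝ, ∀ r : ℝ, F x < r → ∀ᶠ z in nhdsWithin x (Set.Ioi x), slope g x z < r := by
    intro x r hr
    have E1 : ∀ᶠ z in nhdsWithin x (Set.Ioi x), ∀ i : Fin n, θ x i < M x → θ z i < M z := by
      rw [eventually_all]
      intro i
      by_cases hi : θ x i < M x
      · have : ∀ᶠ z in nhds x, θ z i < M z :=
          ContinuousAt.eventually_lt ((hθc i).continuousAt) hMc.continuousAt hi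
        exact (this.filter_mono nhdsWithin_le_nhds).mono (fun z hz _ => hz)
      · exact Filter.Eventually.of_forall (fun z h => absurd h hi)
    have E2 : ∀ᶠ z in nhdsWithin x (Set.Ioi x), ∀ i : Fin n, m x < θ x i → m z < θ z i := by
      rw [eventually_all]
      intro i
      by_cases hi : m x < θ x i
      · have : ∀ᶠ z in nhds x, m z < θ z i :=
          ContinuousAt.eventually_lt hmc.continuousAt ((hθc i).continuousAt) hi
        exact (this.filter_mono nhdsWithin_le_nhds).mono (fun z hz _ => hz)
      · exact Filter.Eventually.of_forall (fun z h => absurd h hi)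
    have E3 : ∀ᶠ z in nhdsWithin x (Set.Ioi x), ∀ p : Fin n × Fin n,
        θ x p.1 = M x → θ x p.2 = m x →
        slope (fun s => θ s p.1 - θ s p.2) x z < r := by
      rw [eventually_all]
      rintro ⟨i, j⟩
      by_cases h1 : θ x i = M x
      · by_cases h2 : θ x j = m x
        · have hd : HasDerivAt (fun s => θ s i - θ s j)
              ((ω i + ∑ k, K * Real.sin (θ x k - θ x i))
                - (ω j + ∑ k, K * Real.sin (θ x k - θ x j))) x :=
            (hODE i x).sub (hODE j x)
          have hdle : (ω i + ∑ k, K * Real.sin (θ x k - θ x i))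
              - (ω j + ∑ k, K * Real.sin (θ x k - θ x j)) ≤ F x := by
            rw [h1, h2]
            have hsum : (∑ k, K * Real.sin (θ x k - M x)) - ∑ k, K * Real.sin (θ x k - m x)
                = ∑ k, K * (Real.sin (θ x k - M x) - Real.sin (θ x k - m x)) := by
              rw [← Finset.sum_sub_distrib]
              exact Finset.sum_congr rfl (fun k _ => by ring)
            have hωij := hω i j
            show _ ≤ a + ∑ k, K * (Real.sin (θ x k - M x) - Real.sin (θ x k - m x))
            linarith [hsum]
          have hlt : (ω i + ∑ k, K * Real.sin (θ x k - θ x i))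
              - (ω j + ∑ k, K * Real.sin (θ x k - θ x j)) < r := lt_of_le_of_lt hdle hr
          have htend := hasDerivAt_iff_tendsto_slope.1 hd
          have hev := htend.eventually (Iio_mem_nhds hlt)
          have hmono : nhdsWithin x (Set.Ioi x) ≤ nhdsWithin x {x}ᶜ :=
            nhdsWithin_mono x (fun z hz => ne_of_gt hz)
          exact (hev.filter_mono hmono).mono (fun z hz _ _ => hz)
        · exact Filter.Eventually.of_forall (fun z _ h => absurd h h2)
      · exact Filter.Eventually.of_forall (fun z h => absurd h h1)
    have := E1.and (E2.and E3)
    refine this.mono ?_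
    rintro z ⟨h1, h2, h3⟩
    obtain ⟨p, q, hp, hq⟩ := hgab z
    have hpx : θ x p = M x := by
      by_contra hcon
      have hlt : θ x p < M x := lt_of_le_of_ne (hθM x p) hcon
      have := h1 p hlt
      rw [hp] at this
      exact lt_irrefl _ this
    have hqx : θ x q = m x := by
      by_contra hcon
      have hlt : m x < θ x q := lt_of_le_of_ne (hmθ x q) (fun h => hcon h.symm)
      have := h2 q hlt
      rw [hq] at this
      exact lt_irrefl _ this
    have e1 : g z = θ z p - θ z q := by
      show M z - m z = _
      rw [hp, hq]
    have e2 : g x = θ x p - θ x q := by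
      show M x - m x = _
      rw [← hpx, ← hqx]
    have hgz : slope g x z = slope (fun s => θ s p - θ s q) x z := by
      rw [slope_def_field, slope_def_field, e1, e2]
    rw [hgz]
    exact h3 (p, q) hpx hqx
  -- barrier argument
  have key : ∀ ε : ℝ, 0 < ε → ε * Real.exp (L * t) ≤ 2 * π - φ →
      g t ≤ φ + ε * Real.exp (L * t) := by
    intro ε hε hεle
    have hBcont : Continuous fun s : ℝ => φ + ε * Real.exp (L * s) :=
      continuous_const.add (continuous_const.mul
        (Real.continuous_exp.comp (continuous_const.mul continuous_id)))
    have happ := image_le_of_liminf_slope_right_lt_deriv_boundary'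
      (f := g) (f' := F) (a := 0) (b := t)
      (B := fun s => φ + ε * Real.exp (L * s)) (B' := fun s => ε * L * Real.exp (L * s))
      hgc.continuousOn
      (fun x _ r hr => (hslope x r hr).frequently)
      (by show g 0 ≤ φ + ε * Real.exp (L * 0); rw [mul_zero, Real.exp_zero]; linarith)
      hBcont.continuousOn
      (fun x _ => by
        have h1 : HasDerivAt (fun s : ℝ => L * s) L x := by
          simpa using (hasDerivAt_id x).const_mul L
        have h2 := h1.exp
        have h3 := (h2.const_mul ε).const_add φ
        have h4 : HasDerivAt (fun s => φ + ε * Real.exp (L * s)) (ε * L * Real.exp (L * x)) x := by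
          exact h3.congr_deriv (by ring)
        exact h4.hasDerivWithinAt)
      (fun x hx hgx => by
        show F x < ε * L * Real.exp (L * x)
        have hgx' : g x = φ + ε * Real.exp (L * x) := hgx
        have hexp_le : Real.exp (L * x) ≤ Real.exp (L * t) :=
          Real.exp_le_exp.2 (mul_le_mul_of_nonneg_left hx.2.le hL0.le)
        have hexp_pos := Real.exp_pos (L * x)
        have hG2π : g x ≤ 2 * π := by
          have h5 : ε * Real.exp (L * x) ≤ ε * Real.exp (L * t) :=
            mul_le_mul_of_nonneg_left hexp_le hε.le
          rw [hgx']; linarith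
        have hGφ : φ ≤ g x := by rw [hgx']; nlinarith
        have hterm : ∀ k ∈ Finset.univ, K * (Real.sin (θ x k - M x) - Real.sin (θ x k - m x))
            ≤ K * (- Real.sin (g x)) := by
          intro k _
          have hA : 0 ≤ M x - θ x k := sub_nonneg.2 (hθM x k)
          have hB : 0 ≤ θ x k - m x := sub_nonneg.2 (hmθ x k)
          have hAB : (M x - θ x k) + (θ x k - m x) = g x := by
            show _ = M x - m x
            ring
          have hsin := sin_superadd hA hB (by rw [hAB]; exact hG2π)
          rw [hAB] at hsin
          have hs1 : Real.sin (θ x k - M x) = - Real.sin (M x - θ x k) := by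
            rw [← Real.sin_neg]; ring_nf
          rw [hs1]
          have hstep : -Real.sin (M x - θ x k) - Real.sin (θ x k - m x) ≤ - Real.sin (g x) := by
            linarith
          exact mul_le_mul_of_nonneg_left hstep hK.le
        have hsum := Finset.sum_le_sum hterm
        rw [Finset.sum_const, Finset.card_univ, Fintype.card_fin] at hsum
        have hsum' : (∑ k, K * (Real.sin (θ x k - M x) - Real.sin (θ x k - m x)))
            ≤ (n : ℝ) * (K * (- Real.sin (g x))) := by
          simpa [nsmul_eq_mul] using hsum
        have hlip : Real.sin φ - Real.sin (g x) ≤ g x - φ := by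
          have h6 := sin_lip φ (g x)
          rwa [abs_of_nonpos (by linarith), neg_sub] at h6
        have hFle : F x ≤ (n : ℝ) * K * (g x - φ) := by
          show a + ∑ k, K * (Real.sin (θ x k - M x) - Real.sin (θ x k - m x)) ≤ _
          nlinarith [mul_le_mul_of_nonneg_left hlip hnK.le]
        have hpos : 0 < (n : ℝ) * K * (ε * Real.exp (L * x)) := by positivity
        calc F x ≤ (n : ℝ) * K * (g x - φ) := hFle
          _ = (n : ℝ) * K * (ε * Real.exp (L * x)) := by rw [hgx']; ring
          _ < ε * L * Real.exp (L * x) := by rw [hLdef]; nlinarith)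
    have := happ (Set.right_mem_Icc.2 ht)
    simpa using this
  have hgt : g t ≤ φ := by
    by_contra hcon
    push_neg at hcon
    have hE := Real.exp_pos (L * t)
    set ε : ℝ := min ((2 * π - φ) / Real.exp (L * t)) ((g t - φ) / (2 * Real.exp (L * t))) with hεdef
    have hε0 : 0 < ε :=
      lt_min (div_pos (by linarith) hE) (div_pos (by linarith) (by positivity))
    have h1 : ε * Real.exp (L * t) ≤ 2 * π - φ := by
      calc ε * Real.exp (L * t)
          ≤ ((2 * π - φ) / Real.exp (L * t)) * Real.exp (L * t) :=
            mul_le_mul_of_nonneg_right (min_le_left _ _) hE.le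
        _ = 2 * π - φ := div_mul_cancel₀ _ hE.ne'
    have h2 : ε * Real.exp (L * t) ≤ (g t - φ) / 2 := by
      calc ε * Real.exp (L * t)
          ≤ ((g t - φ) / (2 * Real.exp (L * t))) * Real.exp (L * t) :=
            mul_le_mul_of_nonneg_right (min_le_right _ _) hE.le
        _ = (g t - φ) / 2 := by field_simp
    have h3 := key ε hε0 h1
    clear_value ε
    have h6 : g t - φ ≤ ε * Real.exp (L * t) := by linarith
    have h7 : g t - φ ≤ (g t - φ) / 2 := le_trans h6 h2
    linarith
  intro i j
  have hij1 : θ t i - θ t j ≤ φ := by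
    have h5 := hθM t i
    have h6 := hmθ t j
    have h7 : g t = M t - m t := rfl
    linarith
  have hij2 : θ t j - θ t i ≤ φ := by
    have h5 := hθM t j
    have h6 := hmθ t i
    have h7 : g t = M t - m t := rfl
    linarith
  rw [abs_sub_le_iff]
  exact ⟨hij1, hij2⟩
end
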